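/- arXiv:2409.13627 — 2 statements merged into one kernel-verified Lean document; each statement's English description precedes it below -/
import Mathlib

section
/- Every solution Z of the limiting equation satisfies, for every t ≥ 0, the mass bound ⟨Z_t,1⟩ ≤ ⟨Z_0,1⟩ · exp(B1 t + (B2/2) t²). -/
open MeasureTheory Set
open scoped RealInnerProductSpace ENNReal NNReal BigOperators

noncomputable section

/-- The plane `ℝ²`, with its Euclidean norm. -/
abbrev R2 : Type := EuclideanSpace ℝ (Fin 2)

/-- The σ-algebra on `M(ℝ²)` inherited from the canonical σ-algebra on measures. -/
noncomputable instance : MeasurableSpace (FiniteMeasure R2) := by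
  unfold FiniteMeasure; infer_instance

/-- The Laplacian of `f : ℝ² → ℝ`, written as the sum of the second derivatives in the
directions of the standard basis. -/
def lap2 (f : R2 → ℝ) (x : R2) : ℝ :=
  ∑ i : Fin 2, fderiv ℝ (fun y => fderiv ℝ f y (EuclideanSpace.single i 1)) x
    (EuclideanSpace.single i 1)

/-- The interaction drift `∫_0^s ∫_{ℝ²} L_{s-r}(x-y) Z_r(dy) dr`. -/
def driftTerm (L : ℝ → R2 → R2) (Z : ℝ → FiniteMeasure R2) (s : ℝ) (x : R2) : R2 :=
  ∫ r in (0:ℝ)..s, ∫ y, L (s - r) (x - y) ∂(Z r : Measure R2)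

/-- Test functions of class `C_b^{1,2}([0,T] × ℝ²)`: bounded, `C¹` in time and `C²` in space,
with bounded first and second order derivatives. -/
structure IsTestFun (T : ℝ) (f : ℝ → R2 → ℝ) : Prop where
  bounded : ∃ M, ∀ s x, |f s x| ≤ M
  time_diff : ∀ x, ContDiffOn ℝ 1 (fun s => f s x) (Icc 0 T)
  space_diff : ∀ s ∈ Icc (0:ℝ) T, ContDiff ℝ 2 (f s)
  derivs_bounded : ∃ M, ∀ s ∈ Icc (0:ℝ) T, ∀ x,
    |derivWithin (fun u => f u x) (Icc 0 T) s| ≤ M ∧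
    ‖fderiv ℝ (f s) x‖ ≤ M ∧ ‖fderiv ℝ (fderiv ℝ (f s)) x‖ ≤ M

/-- `Z` is a weakly continuous `M(ℝ²)`-valued solution of the limiting equation: for every
`T ≥ 0`, every test function `f ∈ C_b^{1,2}([0,T] × ℝ²)` and every `t ∈ [0,T]`,
`⟨Z_t,f_t⟩ = ⟨Z_0,f_0⟩ + ∫_0^t ∫ [∂_s f_s(x) + ∇_x f_s(x)·(∫_0^s ∫ L_{s-r}(x-y) Z_r(dy) dr)
+ (σ²/2) Δ_x f_s(x) + (b1(x) + b2(x)(t-s) - d(x,Z_s)) f_s(x)] Z_s(dx) ds`. -/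
def IsLimitSolution (σ : ℝ) (L : ℝ → R2 → R2) (b1 b2 : R2 → ℝ)
    (d : R2 → FiniteMeasure R2 → ℝ) (Z : ℝ → FiniteMeasure R2) : Prop :=
  ContinuousOn Z (Ici 0) ∧
  ∀ T : ℝ, 0 ≤ T → ∀ f : ℝ → R2 → ℝ, IsTestFun T f → ∀ t ∈ Icc (0:ℝ) T,
    (∫ x, f t x ∂(Z t : Measure R2)) =
      (∫ x, f 0 x ∂(Z 0 : Measure R2)) +
      ∫ s in (0:ℝ)..t, ∫ x,
        (derivWithin (fun u => f u x) (Icc 0 T) s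
          + ⟪gradient (f s) x, driftTerm L Z s x⟫
          + (σ ^ 2 / 2) * lap2 (f s) x
          + (b1 x + b2 x * (t - s) - d x (Z s)) * f s x) ∂(Z s : Measure R2)

lemma gronwall_integral_aux {m k : ℝ → ℝ} {t m0 : ℝ} (ht : 0 < t)
    (hm : Continuous m) (hk : Continuous k)
    (hknn : ∀ u ∈ Icc (0:ℝ) t, 0 ≤ k u)
    (h : ∀ u ∈ Icc (0:ℝ) t, m u ≤ m0 + ∫ s in (0:ℝ)..u, k s * m s) :
    m t ≤ m0 * Real.exp (∫ s in (0:ℝ)..t, k s) := by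
  set ψ : ℝ → ℝ := fun u => m0 + ∫ s in (0:ℝ)..u, k s * m s with hψdef
  set K : ℝ → ℝ := fun u => ∫ s in (0:ℝ)..u, k s with hKdef
  have hkm : Continuous (fun s => k s * m s) := hk.mul hm
  have hψ : ∀ u, HasDerivAt ψ (k u * m u) u := fun u =>
    (intervalIntegral.integral_hasDerivAt_right (hkm.intervalIntegrable _ _)
      hkm.aestronglyMeasurable.stronglyMeasurableAtFilter hkm.continuousAt).const_add m0
  have hK : ∀ u, HasDerivAt K (k u) u := fun u =>
    intervalIntegral.integral_hasDerivAt_right (hk.intervalIntegrable _ _)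
      hk.aestronglyMeasurable.stronglyMeasurableAtFilter hk.continuousAt
  set Φ : ℝ → ℝ := fun u => ψ u * Real.exp (-K u) with hΦdef
  have hΦ : ∀ u, HasDerivAt Φ
      ((k u * m u) * Real.exp (-K u) + ψ u * (Real.exp (-K u) * (-(k u)))) u :=
    fun u => (hψ u).mul (((hK u).neg).exp)
  have hanti : AntitoneOn Φ (Icc 0 t) := by
    apply antitoneOn_of_deriv_nonpos (convex_Icc 0 t)
    · exact (continuous_iff_continuousAt.2 fun u => (hΦ u).continuousAt).continuousOn
    · intro u hu
      exact ((hΦ u).differentiableAt).differentiableWithinAt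
    · intro u hu
      rw [interior_Icc] at hu
      rw [(hΦ u).deriv]
      have h1 : m u ≤ ψ u := h u ⟨hu.1.le, hu.2.le⟩
      have h2 : 0 ≤ k u := hknn u ⟨hu.1.le, hu.2.le⟩
      have h3 : 0 < Real.exp (-K u) := Real.exp_pos _
      nlinarith [mul_nonneg (mul_nonneg h2 (sub_nonneg.2 h1)) h3.le]
  have hΦ0 : Φ 0 = m0 := by
    simp [hΦdef, hψdef, hKdef, intervalIntegral.integral_same]
  have hΦt : Φ t ≤ m0 := by
    rw [← hΦ0]
    exact hanti ⟨le_refl 0, ht.le⟩ ⟨ht.le, le_refl t⟩ ht.le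
  have hmul : ψ t ≤ m0 * Real.exp (K t) := by
    have := mul_le_mul_of_nonneg_right hΦt (Real.exp_pos (K t)).le
    rw [hΦdef] at this
    simp only [mul_assoc, ← Real.exp_add, neg_add_cancel, Real.exp_zero, mul_one] at this
    exact this
  exact le_trans (h t ⟨ht.le, le_refl t⟩) hmul

/-- **Mass bound for solutions of the limiting equation**: every solution `Z` of the limiting
equation satisfies `⟨Z_t,1⟩ ≤ ⟨Z_0,1⟩ exp(B1 t + (B2/2) t²)` for every `t ≥ 0`. -/
theorem limitSolution_mass_bound
    (σ B1 B2 C : ℝ) (hσ : 0 < σ) (hB1 : 0 < B1) (hB2 : 0 < B2) (hC : 0 < C)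
    (h1 : ℝ → ℝ) (hh1_nonneg : ∀ t, 0 ≤ h1 t) (hh1_int : IntegrableOn h1 (Ici 0))
    (L : ℝ → R2 → R2) (hL_meas : Measurable (Function.uncurry L))
    (hL_bd : ∀ t x, 0 ≤ t → ‖L t x‖ ≤ h1 t)
    (b1 b2 : R2 → ℝ) (hb1_meas : Measurable b1) (hb2_meas : Measurable b2)
    (hb1_nonneg : ∀ x, 0 ≤ b1 x) (hb2_nonneg : ∀ x, 0 ≤ b2 x)
    (hb1_bd : ∀ x, b1 x ≤ B1) (hb2_bd : ∀ x, b2 x ≤ B2)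
    (d : R2 → FiniteMeasure R2 → ℝ) (hd_meas : Measurable (Function.uncurry d))
    (hd_nonneg : ∀ x ν, 0 ≤ d x ν) (hd_bd : ∀ x ν, d x ν ≤ C * (ν.mass : ℝ))
    (Z : ℝ → FiniteMeasure R2) (hZ : IsLimitSolution σ L b1 b2 d Z) :
    ∀ t : ℝ, 0 ≤ t →
      ((Z t).mass : ℝ) ≤ ((Z 0).mass : ℝ) * Real.exp (B1 * t + B2 / 2 * t ^ 2) := by
  intro t ht0
  rcases eq_or_lt_of_le ht0 with h0 | ht
  · rw [← h0]; simp
  clear ht0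
  -- the (extended) mass function
  set m : ℝ → ℝ := fun s => ((Z (max s 0)).mass : ℝ) with hmdef
  have hm_cont : Continuous m := by
    have hmax : Continuous fun s : ℝ => max s 0 := continuous_id.max continuous_const
    have hZc : Continuous fun s : ℝ => Z (max s 0) :=
      hZ.1.comp_continuous hmax (fun s => le_max_right s 0)
    exact NNReal.continuous_coe.comp (FiniteMeasure.continuous_mass.comp hZc)
  have hmeq : ∀ s : ℝ, 0 ≤ s → m s = ((Z s).mass : ℝ) := by
    intro s hs; rw [hmdef]; simp [max_eq_left hs]
  have hm_nonneg : ∀ s : ℝ, 0 ≤ m s := fun s => (Z (max s 0)).mass.coe_nonneg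
  -- the constant-one test function
  have htest : IsTestFun t (fun _ _ => (1:ℝ)) := by
    refine ⟨⟨1, fun s x => by norm_num⟩, fun x => contDiffOn_const, fun s _ => contDiff_const,
      ⟨1, fun s hs x => ⟨?_, ?_, ?_⟩⟩⟩
    · have : derivWithin (fun _ : ℝ => (1:ℝ)) (Icc 0 t) s = 0 :=
        (hasDerivWithinAt_const _ _ (1:ℝ)).derivWithin ((uniqueDiffOn_Icc ht) s hs)
      rw [this]; norm_num
    · simp
    · simp [fderiv_fun_const, Pi.zero_def, fderiv_const_apply]
      exact (norm_zero (E := R2 →L[ℝ] R2 →L[ℝ] ℝ)).le.trans zero_le_one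
  -- mass as an integral
  have hmass_int : ∀ s : ℝ, ∀ c : ℝ, ∫ _ : R2, c ∂(Z s : Measure R2) = ((Z s).mass : ℝ) * c := by
    intro s c
    rw [integral_const, smul_eq_mul, measureReal_def, ← FiniteMeasure.ennreal_mass, ENNReal.coe_toReal]
  -- measurability/integrability of the inner integrand
  have hd_meas' : ∀ ν : FiniteMeasure R2, Measurable fun x => d x ν := fun ν =>
    hd_meas.comp (measurable_id.prodMk measurable_const)
  have hInner : ∀ (s c : ℝ), Integrable (fun x => b1 x + b2 x * c - d x (Z s))
      (Z s : Measure R2) := by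
    intro s c
    have hmeas : Measurable fun x => b1 x + b2 x * c - d x (Z s) :=
      (hb1_meas.add (hb2_meas.mul_const c)).sub (hd_meas' (Z s))
    refine Integrable.mono' (integrable_const (B1 + B2 * |c| + C * ((Z s).mass : ℝ)))
      hmeas.aestronglyMeasurable (ae_of_all _ fun x => ?_)
    have h1 := hb1_nonneg x; have h2 := hb1_bd x; have h3 := hb2_nonneg x
    have h4 := hb2_bd x; have h5 := hd_nonneg x (Z s); have h6 := hd_bd x (Z s)
    have h7 : |b2 x * c| ≤ B2 * |c| := by
      rw [abs_mul, abs_of_nonneg h3]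
      exact mul_le_mul_of_nonneg_right h4 (abs_nonneg c)
    have h8 : (0:ℝ) ≤ C * ((Z s).mass : ℝ) := mul_nonneg hC.le (Z s).mass.coe_nonneg
    rw [Real.norm_eq_abs]
    refine abs_le.2 ⟨?_, ?_⟩
    · nlinarith [neg_abs_le (b2 x * c)]
    · nlinarith [le_abs_self (b2 x * c)]
  -- key integral inequality
  have key : ∀ u ∈ Icc (0:ℝ) t,
      m u ≤ m 0 + ∫ s in (0:ℝ)..u, (B1 + B2 * (t - s)) * m s := by
    intro u hu
    have heq := hZ.2 t ht.le _ htest u hu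
    set g2 : ℝ → ℝ := fun s => ∫ x, (b1 x + b2 x * (u - s) - d x (Z s)) ∂(Z s : Measure R2)
      with hg2def
    have hcongr : (∫ s in (0:ℝ)..u, ∫ x,
        (derivWithin (fun v => (fun _ _ => (1:ℝ)) v x) (Icc 0 t) s
          + ⟪gradient ((fun _ _ => (1:ℝ)) s) x, driftTerm L Z s x⟫
          + (σ ^ 2 / 2) * lap2 ((fun _ _ => (1:ℝ)) s) x
          + (b1 x + b2 x * (u - s) - d x (Z s)) * (fun _ _ => (1:ℝ)) s x)
          ∂(Z s : Measure R2)) = ∫ s in (0:ℝ)..u, g2 s := by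
      apply intervalIntegral.integral_congr
      intro s hs
      rw [uIcc_of_le hu.1] at hs
      apply integral_congr_ae (ae_of_all _ fun x => ?_)
      have hder : derivWithin (fun _ : ℝ => (1:ℝ)) (Icc 0 t) s = 0 :=
        (hasDerivWithinAt_const _ _ (1:ℝ)).derivWithin
          ((uniqueDiffOn_Icc ht) s ⟨hs.1, hs.2.trans hu.2⟩)
      simp [hder, lap2, gradient_const, fderiv_const]
    rw [hcongr] at heq
    have hLHS : (∫ x, (fun _ _ => (1:ℝ)) u x ∂(Z u : Measure R2)) = m u := by
      rw [hmeq u hu.1]; simpa using hmass_int u 1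
    have hRHS0 : (∫ x, (fun _ _ => (1:ℝ)) 0 x ∂(Z 0 : Measure R2)) = m 0 := by
      rw [hmeq 0 le_rfl]; simpa using hmass_int 0 1
    rw [hLHS, hRHS0] at heq
    rw [heq]
    gcongr m 0 + ?_
    -- compare the two interval integrals
    have hk_cont : Continuous fun s : ℝ => (B1 + B2 * (t - s)) * m s :=
      (continuous_const.add (continuous_const.mul (continuous_const.sub continuous_id))).mul
        hm_cont
    have hpt : ∀ s ∈ Icc (0:ℝ) u, g2 s ≤ (B1 + B2 * (t - s)) * m s := by
      intro s hs
      have hle : ∀ x, b1 x + b2 x * (u - s) - d x (Z s) ≤ B1 + B2 * (t - s) := by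
        intro x
        have h1 : b2 x * (u - s) ≤ B2 * (u - s) :=
          mul_le_mul_of_nonneg_right (hb2_bd x) (sub_nonneg.2 hs.2)
        have h2 : B2 * (u - s) ≤ B2 * (t - s) :=
          mul_le_mul_of_nonneg_left (by linarith [hu.2]) hB2.le
        linarith [hb1_bd x, hd_nonneg x (Z s)]
      calc g2 s ≤ ∫ _ : R2, (B1 + B2 * (t - s)) ∂(Z s : Measure R2) :=
            integral_mono (hInner s (u - s)) (integrable_const _) hle
        _ = (B1 + B2 * (t - s)) * m s := by
            rw [hmass_int s, hmeq s hs.1]; ring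
    by_cases hIg : IntervalIntegrable g2 volume 0 u
    · exact intervalIntegral.integral_mono_on hu.1 hIg (hk_cont.intervalIntegrable 0 u) hpt
    · rw [intervalIntegral.integral_undef hIg]
      apply intervalIntegral.integral_nonneg hu.1
      intro s hs
      have : (0:ℝ) ≤ B1 + B2 * (t - s) := by nlinarith [hs.2, hu.2, hs.1]
      exact mul_nonneg this (hm_nonneg s)
  -- apply Grönwall
  have hk_cont : Continuous fun s : ℝ => B1 + B2 * (t - s) :=
    continuous_const.add (continuous_const.mul (continuous_const.sub continuous_id))
  have hknn : ∀ u ∈ Icc (0:ℝ) t, 0 ≤ B1 + B2 * (t - u) := by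
    intro u hu; nlinarith [hu.2]
  have hgron := gronwall_integral_aux ht hm_cont hk_cont hknn key
  have hcalc : (∫ s in (0:ℝ)..t, (B1 + B2 * (t - s))) = B1 * t + B2 / 2 * t ^ 2 := by
    have h1 : (fun s : ℝ => B1 + B2 * (t - s)) = fun s => (B1 + B2 * t) + (-B2) * s := by
      funext s; ring
    have hI2 : IntervalIntegrable (fun s : ℝ => -B2 * s) volume 0 t := by
      apply Continuous.intervalIntegrable; fun_prop
    rw [h1, intervalIntegral.integral_add intervalIntegrable_const hI2,
      _root_.intervalIntegral.integral_const, _root_.intervalIntegral.integral_const_mul,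
      integral_id, smul_eq_mul]
    ring
  rw [hcalc] at hgron
  rw [← hmeq t ht.le, ← hmeq 0 le_rfl]
  exact hgron

end
end

section
/- Let h : [0,∞) → [0,∞) be measurable and nondecreasing. Then the function t ↦ ∫_0^t ( (t−s)^{−1/2} + 1 ) h(s) ds is nondecreasing on [0,∞), i.e., for all 0 ≤ t ≤ t′: ∫_0^t ((t−s)^{−1/2} + 1) h(s) ds ≤ ∫_0^{t′} ((t′−s)^{−1/2} + 1) h(s) ds. -/
open MeasureTheory Set
open scoped ENNReal

/-- **Monotonicity of the singular-kernel integral**: if `h : [0,∞) → [0,∞)` is measurable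
and nondecreasing, then `t ↦ ∫_0^t ((t-s)^{-1/2} + 1) h(s) ds` is nondecreasing, i.e. for
all `0 ≤ t ≤ t'`, `∫_0^t ((t-s)^{-1/2} + 1) h(s) ds ≤ ∫_0^{t'} ((t'-s)^{-1/2} + 1) h(s) ds`
(the integrals being Lebesgue integrals of nonnegative functions, possibly infinite). -/
theorem singular_kernel_integral_monotone (h : ℝ → ℝ) (hmeas : Measurable h)
    (hnonneg : ∀ s, 0 ≤ s → 0 ≤ h s) (hmono : MonotoneOn h (Ici 0)) :
    ∀ t t' : ℝ, 0 ≤ t → t ≤ t' →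
      (∫⁻ s in Ioc (0:ℝ) t, ENNReal.ofReal (((t - s) ^ (-(1:ℝ)/2) + 1) * h s)) ≤
        ∫⁻ s in Ioc (0:ℝ) t', ENNReal.ofReal (((t' - s) ^ (-(1:ℝ)/2) + 1) * h s) := by
  intro t t' ht htt'
  have key : ∀ a : ℝ, 0 ≤ a →
      (∫⁻ s in Ioc (0:ℝ) a, ENNReal.ofReal (((a - s) ^ (-(1:ℝ)/2) + 1) * h s)) =
      ∫⁻ x in Ico (0:ℝ) a, ENNReal.ofReal ((x ^ (-(1:ℝ)/2) + 1) * h (a - x)) := by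
    intro a ha
    have hmp : MeasurePreserving (fun x : ℝ => a - x) volume volume :=
      Measure.measurePreserving_sub_left volume a
    have hemb : MeasurableEmbedding (fun x : ℝ => a - x) :=
      (MeasurableEquiv.subLeft a).measurableEmbedding
    have hpre : (fun x : ℝ => a - x) ⁻¹' (Ioc 0 a) = Ico 0 a := by
      ext x; simp only [mem_preimage, mem_Ioc, mem_Ico]
      constructor <;> intro hx <;> constructor <;> linarith [hx.1, hx.2]
    calc (∫⁻ s in Ioc (0:ℝ) a, ENNReal.ofReal (((a - s) ^ (-(1:ℝ)/2) + 1) * h s))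
        = ∫⁻ x in (fun x : ℝ => a - x) ⁻¹' (Ioc 0 a),
            ENNReal.ofReal (((a - (a - x)) ^ (-(1:ℝ)/2) + 1) * h (a - x)) :=
          (hmp.setLIntegral_comp_preimage_emb hemb _ _).symm
      _ = ∫⁻ x in Ico (0:ℝ) a, ENNReal.ofReal ((x ^ (-(1:ℝ)/2) + 1) * h (a - x)) := by
          rw [hpre]; simp
  rw [key t ht, key t' (ht.trans htt')]
  calc (∫⁻ x in Ico (0:ℝ) t, ENNReal.ofReal ((x ^ (-(1:ℝ)/2) + 1) * h (t - x)))
      ≤ ∫⁻ x in Ico (0:ℝ) t, ENNReal.ofReal ((x ^ (-(1:ℝ)/2) + 1) * h (t' - x)) := by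
        apply setLIntegral_mono
          (Measurable.ennreal_ofReal (((measurable_id.pow_const _).add measurable_const).mul
            (hmeas.comp (measurable_const.sub measurable_id))))
        intro x hx
        apply ENNReal.ofReal_le_ofReal
        apply mul_le_mul_of_nonneg_left _ (add_nonneg (Real.rpow_nonneg hx.1 _) zero_le_one)
        exact hmono (by simp; linarith [hx.1, hx.2]) (by simp; linarith [hx.1, hx.2])
          (by show t - x ≤ t' - x; linarith)
    _ ≤ ∫⁻ x in Ico (0:ℝ) t', ENNReal.ofReal ((x ^ (-(1:ℝ)/2) + 1) * h (t' - x)) :=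
        lintegral_mono_set (Ico_subset_Ico_right htt')
end
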